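/- Let (T, X) be a tree decomposition of a graph G such that for each node i the torso of X(i) is triconnected, the adhesion is at most two, and each adhesion set is a minimal separator of G or empty. If {x, y} is a minimal separator of G, then for every node i with {x, y} ⊆ X(i), the edge {x, y} is present in the torso of X(i). -/

import Mathlib

open SimpleGraph

variable {V : Type*}

/-- Reachability within the subgraph of `G` induced by the vertex set `W`. -/
def ReachIn (G : SimpleGraph V) (W : Set V) (x y : V) : Prop :=
  ∃ (hx : x ∈ W) (hy : y ∈ W), (G.induce W).Reachable ⟨x, hx⟩ ⟨y, hy⟩

/-- Removing `S` disconnects some connected component of `G`: there are two vertices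
outside `S` that are connected in `G` but not in `G - S`. -/
def Separates (G : SimpleGraph V) (S : Set V) : Prop :=
  ∃ u v : V, u ∉ S ∧ v ∉ S ∧ G.Reachable u v ∧ ¬ ReachIn G Sᶜ u v

/-- `S` is a minimal separator of `G`. -/
def IsMinimalSeparator (G : SimpleGraph V) (S : Set V) : Prop :=
  Separates G S ∧ ∀ S' ⊂ S, ¬ Separates G S'

/-- `C` is a connected component of the subgraph of `G` induced by `W`. -/
def IsCompOf (G : SimpleGraph V) (C W : Set V) : Prop :=
  C ⊆ W ∧ (G.induce C).Connected ∧ ∀ u ∈ C, ∀ v ∈ W, G.Adj u v → v ∈ C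

/-- A separation `(A, B)` of a graph `G`. -/
def IsSeparation (G : SimpleGraph V) (A B : Set V) : Prop :=
  A ∪ B = Set.univ ∧ ∀ u ∈ A \ B, ∀ v ∈ B \ A, ¬ G.Adj u v

/-- `(T, X)` is a tree decomposition of `G`. -/
structure IsTreeDecomp {ι : Type*} (G : SimpleGraph V) (T : SimpleGraph ι)
    (X : ι → Set V) : Prop where
  isTree : T.IsTree
  covers_verts : ∀ v : V, ∃ i, v ∈ X i
  covers_edges : ∀ ⦃u v : V⦄, G.Adj u v → ∃ i, u ∈ X i ∧ v ∈ X i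
  subtree : ∀ v : V, (T.induce {i | v ∈ X i}).Connected

/-- The tree decomposition given by the bag function `X` has adhesion at most `d`. -/
def AdhesionLE {ι : Type*} (T : SimpleGraph ι) (X : ι → Set V) (d : ℕ) : Prop :=
  ∀ ⦃i j : ι⦄, T.Adj i j → (X i ∩ X j).ncard ≤ d

/-- The torso of the vertex set `W` in `G`: the induced subgraph `G[W]` with an edge added
between each pair of vertices of `W` connected by a path internally avoiding `W`. -/
def torso (G : SimpleGraph V) (W : Set V) : SimpleGraph W :=
  SimpleGraph.fromRel (fun u v =>
    G.Adj u v ∨ ∃ p : G.Walk (u : V) (v : V), p.IsPath ∧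
      ∀ z ∈ p.support, z ≠ (u : V) → z ≠ (v : V) → z ∉ W)

/-- One smoothing step: `K` is obtained from `H` by replacing the degree-2 vertex `v`,
whose two neighbors are `a` and `b`, by a direct edge between `a` and `b`. -/
def SmoothStep (H K : SimpleGraph.Subgraph (⊤ : SimpleGraph V)) : Prop :=
  ∃ v a b : V, a ≠ b ∧ a ≠ v ∧ b ≠ v ∧ v ∈ H.verts ∧ H.neighborSet v = {a, b} ∧
    K.verts = H.verts \ {v} ∧
    ∀ x y : V, K.Adj x y ↔ ((H.Adj x y ∧ x ≠ v ∧ y ≠ v) ∨ (x = a ∧ y = b) ∨ (x = b ∧ y = a))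

/-- `K` (a graph on a subset of the vertices of `G`) is a topological minor of `G`:
it is obtained from a subgraph of `G` by repeatedly smoothing degree-2 vertices. -/
def IsTopMinor (K : SimpleGraph.Subgraph (⊤ : SimpleGraph V)) (G : SimpleGraph V) : Prop :=
  ∃ H₀ : SimpleGraph.Subgraph (⊤ : SimpleGraph V),
    (∀ ⦃x y : V⦄, H₀.Adj x y → G.Adj x y) ∧ Relation.ReflTransGen SmoothStep H₀ K

/-- An abstract graph `H` is a topological minor of `G` if it is isomorphic to some
topological minor of `G`. -/
def IsTopMinorGraph {W : Type*} (H : SimpleGraph W) (G : SimpleGraph V) : Prop :=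
  ∃ K : SimpleGraph.Subgraph (⊤ : SimpleGraph V), IsTopMinor K G ∧ Nonempty (H ≃g K.coe)

/-- One edge-contraction step: `K` is obtained from `H` by contracting the edge `{a, b}`
(the vertex `b` is merged into `a`). -/
def ContractStep (H K : SimpleGraph.Subgraph (⊤ : SimpleGraph V)) : Prop :=
  ∃ a b : V, H.Adj a b ∧ K.verts = H.verts \ {b} ∧
    ∀ x y : V, K.Adj x y ↔ (x ≠ b ∧ y ≠ b ∧ x ≠ y ∧
      (H.Adj x y ∨ (x = a ∧ H.Adj b y) ∨ (y = a ∧ H.Adj x b)))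

/-- `G` contains `Hpat` as a minor: some graph obtained from a subgraph of `G` by
contracting edges is isomorphic to `Hpat`. -/
def HasMinor {W : Type*} (G : SimpleGraph V) (Hpat : SimpleGraph W) : Prop :=
  ∃ H₀ K : SimpleGraph.Subgraph (⊤ : SimpleGraph V),
    (∀ ⦃x y : V⦄, H₀.Adj x y → G.Adj x y) ∧ Relation.ReflTransGen ContractStep H₀ K ∧
      Nonempty (Hpat ≃g K.coe)

/-- Planarity, via Wagner's theorem: no `K₅`-minor and no `K₃,₃`-minor. -/
def IsPlanar (G : SimpleGraph V) : Prop :=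
  ¬ HasMinor G (completeGraph (Fin 5)) ∧ ¬ HasMinor G (completeBipartiteGraph (Fin 3) (Fin 3))

/-- A graph is triconnected if removing fewer than three vertices cannot disconnect it. -/
def Triconnected (G : SimpleGraph V) : Prop :=
  ∀ S : Set V, S.ncard < 3 → (G.induce Sᶜ).Preconnected

/-- A graph is claw-free if it has no induced `K_{1,3}`. -/
def ClawFree (G : SimpleGraph V) : Prop :=
  ∀ v a b c : V, G.Adj v a → G.Adj v b → G.Adj v c → a ≠ b → a ≠ c → b ≠ c →
    ¬ G.Adj a b → ¬ G.Adj a c → G.Adj b c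


section Helpers

variable {G : SimpleGraph V} {W : Set V} {x y z : V}

lemma reachIn_refl (h : x ∈ W) : ReachIn G W x x := ⟨h, h, Reachable.refl _⟩

lemma reachIn_symm : ReachIn G W x y → ReachIn G W y x
  | ⟨hx, hy, h⟩ => ⟨hy, hx, h.symm⟩

lemma reachIn_trans : ReachIn G W x y → ReachIn G W y z → ReachIn G W x z
  | ⟨hx, hy, h⟩, ⟨hy', hz, h'⟩ => ⟨hx, hz, h.trans h'⟩

lemma reachIn_adj (hx : x ∈ W) (hy : y ∈ W) (h : G.Adj x y) : ReachIn G W x y :=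
  ⟨hx, hy, Adj.reachable (by simpa [comap_adj] using h)⟩

lemma reachIn_of_walk {a b : V} (p : G.Walk a b) (h : ∀ z ∈ p.support, z ∈ W) :
    ReachIn G W a b := by
  induction p with
  | nil => exact reachIn_refl (h _ (by simp))
  | cons hadj q ih =>
      refine reachIn_trans (reachIn_adj (h _ (by simp)) (h _ (by simp)) hadj) (ih ?_)
      intro z hz; exact h z (by simp [hz])

lemma walk_of_reachIn {a b : V} (h : ReachIn G W a b) :
    ∃ p : G.Walk a b, ∀ z ∈ p.support, z ∈ W := by
  obtain ⟨ha, hb, hr⟩ := h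
  obtain ⟨q⟩ := hr
  refine ⟨q.map (Embedding.induce W).toHom, ?_⟩
  intro z hz
  have key := Walk.support_map (Embedding.induce W).toHom q
  have hz' : z ∈ List.map (Embedding.induce W).toHom q.support := key ▸ hz
  simp only [List.mem_map] at hz'
  obtain ⟨w, -, rfl⟩ := hz'
  exact w.2

/-- From a walk `u → y` avoiding `x`, extract a neighbor `w` of `y` reachable from `u`
in `G - {x,y}`. -/
lemma neighbor_of_walk {u : V} (q : G.Walk u y) (hu : u ≠ y) (hxs : x ∉ q.support) :
    ∃ w, G.Adj w y ∧ ReachIn G ({x, y} : Set V)ᶜ u w := by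
  induction q with
  | nil => exact absurd rfl hu
  | @cons a c e hadj q ih =>
      have hax : a ≠ x := fun h => hxs (h ▸ by simp)
      by_cases hcy : c = e
      · subst hcy
        exact ⟨a, hadj, reachIn_refl (by simp [hax, hu])⟩
      · obtain ⟨w, hw, hr⟩ := ih hcy (fun h => hxs (by simp [h, Walk.support_cons]))
        have hcx : c ≠ x := fun h => hxs (by
          simp only [Walk.support_cons, List.mem_cons]
          exact Or.inr (h ▸ q.start_mem_support))
        exact ⟨w, hw, reachIn_trans
          (reachIn_adj (by simp [hax, hu]) (by simp [hcx, hcy]) hadj) hr⟩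

/-- Fullness: the side of `u` (in `G - {x,y}`) has a neighbor of `y`. -/
lemma full_side {u v : V} (hu : u ∉ ({x, y} : Set V))
    (hv : v ∉ ({x, y} : Set V)) (hr : G.Reachable u v)
    (hnr : ¬ ReachIn G ({x, y} : Set V)ᶜ u v) (hns : ¬ Separates G {x}) :
    ∃ w, G.Adj w y ∧ ReachIn G ({x, y} : Set V)ᶜ u w := by
  classical
  have h1 : ReachIn G ({x} : Set V)ᶜ u v := by
    by_contra h
    exact hns ⟨u, v, by simp at hu ⊢; exact hu.1, by simp at hv ⊢; exact hv.1, hr, h⟩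
  obtain ⟨p, hp⟩ := walk_of_reachIn h1
  have hxp : x ∉ p.support := fun h => by simpa using hp x h
  have hyp : y ∈ p.support := by
    by_contra hyp
    exact hnr (reachIn_of_walk p (fun z hz => by
      simp only [Set.mem_compl_iff, Set.mem_insert_iff, Set.mem_singleton_iff]
      rintro (rfl | rfl)
      exacts [hxp hz, hyp hz]))
  exact neighbor_of_walk (p.takeUntil y hyp) (by simp at hu; exact hu.2)
    (fun h => hxp (p.support_takeUntil_subset hyp h))

/-- A torso edge between two vertices avoiding `{x,y} ⊆ Xi` gives reachability in
`G - {x,y}`. -/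
lemma reachIn_of_torso_adj {Xi : Set V} {a b : Xi} (hxXi : x ∈ Xi) (hyXi : y ∈ Xi)
    (hax : (a : V) ∉ ({x, y} : Set V)) (hbx : (b : V) ∉ ({x, y} : Set V))
    (h : (torso G Xi).Adj a b) : ReachIn G ({x, y} : Set V)ᶜ (a : V) (b : V) := by
  rw [torso, fromRel_adj] at h
  obtain ⟨hne, h | h⟩ := h
  · rcases h with h | ⟨p, hp, hav⟩
    · exact reachIn_adj hax hbx h
    · refine reachIn_of_walk p fun z hz => ?_
      by_cases hza : z = (a : V); · exact hza ▸ hax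
      by_cases hzb : z = (b : V); · exact hzb ▸ hbx
      intro hzxy
      rcases hzxy with rfl | rfl
      exacts [hav z hz hza hzb hxXi, hav z hz hza hzb (by simpa using hyXi)]
  · refine reachIn_symm ?_
    rcases h with h | ⟨p, hp, hav⟩
    · exact reachIn_adj hbx hax h
    · refine reachIn_of_walk p fun z hz => ?_
      by_cases hzb : z = (b : V); · exact hzb ▸ hbx
      by_cases hza : z = (a : V); · exact hza ▸ hax
      intro hzxy
      rcases hzxy with rfl | rfl
      exacts [hav z hz hzb hza hxXi, hav z hz hzb hza (by simpa using hyXi)]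

lemma mem_compl_pair {Xi : Set V} (hxXi : x ∈ Xi) (hyXi : y ∈ Xi)
    (c : {c : Xi // c ∈ ({⟨x, hxXi⟩, ⟨y, hyXi⟩} : Set Xi)ᶜ}) :
    ((c : Xi) : V) ∈ ({x, y} : Set V)ᶜ := by
  have h2 := c.2
  simp only [Set.mem_compl_iff, Set.mem_insert_iff, Set.mem_singleton_iff] at h2 ⊢
  exact fun h => h2 (h.imp (fun h => Subtype.ext h) (fun h => Subtype.ext h))

/-- A walk in the torso of `Xi` minus `{x,y}` gives reachability in `G - {x,y}`. -/
lemma reachIn_of_torso_walk {Xi : Set V} (hxXi : x ∈ Xi) (hyXi : y ∈ Xi)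
    {a b : {c : Xi // c ∈ ({⟨x, hxXi⟩, ⟨y, hyXi⟩} : Set Xi)ᶜ}}
    (p : ((torso G Xi).induce ({⟨x, hxXi⟩, ⟨y, hyXi⟩} : Set Xi)ᶜ).Walk a b) :
    ReachIn G ({x, y} : Set V)ᶜ ((a : Xi) : V) ((b : Xi) : V) := by
  induction p with
  | @nil c => exact reachIn_refl (mem_compl_pair hxXi hyXi c)
  | @cons c d e hadj q ih =>
      exact reachIn_trans (reachIn_of_torso_adj hxXi hyXi (mem_compl_pair hxXi hyXi c)
        (mem_compl_pair hxXi hyXi d) hadj) ih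

lemma torso_edge_of_side {Xi : Set V} (hx : x ∈ Xi) (hy : y ∈ Xi) (hxy : x ≠ y)
    {u wx wy : V} (hwx : G.Adj wx x) (hwy : G.Adj wy y)
    (hrx : ReachIn G ({x, y} : Set V)ᶜ u wx) (hry : ReachIn G ({x, y} : Set V)ᶜ u wy)
    (hdisj : ∀ c, ReachIn G ({x, y} : Set V)ᶜ u c → c ∉ Xi) :
    (torso G Xi).Adj ⟨x, hx⟩ ⟨y, hy⟩ := by
  classical
  obtain ⟨p0, hp0⟩ := walk_of_reachIn (reachIn_trans (reachIn_symm hrx) hry)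
  have hsupp : ∀ z ∈ p0.support, z ∉ Xi := by
    intro z hz
    refine hdisj z (reachIn_trans hrx (reachIn_of_walk (p0.takeUntil z hz) ?_))
    exact fun w hw => hp0 w (p0.support_takeUntil_subset hz hw)
  set q : G.Walk x y := Walk.cons hwx.symm (p0.append (Walk.cons hwy Walk.nil)) with hq
  have hqsupp : ∀ z ∈ q.support, z ≠ x → z ≠ y → z ∉ Xi := by
    intro z hz hzx hzy
    simp only [hq, Walk.support_cons, Walk.support_append, Walk.support_nil,
      List.mem_cons, List.mem_append, List.tail_cons] at hz
    rcases hz with rfl | hz | hz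
    · exact absurd rfl hzx
    · exact hsupp z hz
    · simp at hz; exact absurd hz hzy
  rw [torso, fromRel_adj]
  refine ⟨by simp [hxy], Or.inl (Or.inr ⟨q.toPath, q.toPath.2, ?_⟩)⟩
  exact fun z hz => hqsupp z (q.support_toPath_subset hz)

end Helpers

/-- In a Tutte decomposition (triconnected torsos that are topological minors, adhesion at
most two, adhesion sets minimal separators or empty), every minimal separator `{x, y}`
of `G` induces the edge `{x, y}` in the torso of each bag containing both `x` and `y`. -/
theorem minimalSep_edge_in_torso [Fintype V] {ι : Type*} [Fintype ι]
    (G : SimpleGraph V) (T : SimpleGraph ι) (X : ι → Set V)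
    (hTD : IsTreeDecomp G T X) (hadh : AdhesionLE T X 2)
    (htri : ∀ i, Triconnected (torso G (X i)))
    (htm : ∀ i, IsTopMinorGraph (torso G (X i)) G)
    (hmin : ∀ ⦃i j : ι⦄, T.Adj i j → IsMinimalSeparator G (X i ∩ X j) ∨ X i ∩ X j = ∅)
    (x y : V) (hxy : x ≠ y) (hsep : IsMinimalSeparator G {x, y}) :
    ∀ (i : ι) (hx : x ∈ X i) (hy : y ∈ X i), (torso G (X i)).Adj ⟨x, hx⟩ ⟨y, hy⟩ := by
    classical
  intro i hxi hyi
  obtain ⟨⟨u, v, hu, hv, hr, hnr⟩, hminS⟩ := hsep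
  have hnsx : ¬ Separates G {x} := by
    refine hminS {x} (Set.ssubset_iff_subset_ne.2 ⟨by simp, fun h => ?_⟩)
    have : y ∈ ({x} : Set V) := by rw [h]; simp
    exact hxy (Set.mem_singleton_iff.1 this).symm
  have hnsy : ¬ Separates G {y} := by
    refine hminS {y} (Set.ssubset_iff_subset_ne.2 ⟨by simp [Set.subset_def], fun h => ?_⟩)
    have : x ∈ ({y} : Set V) := by rw [h]; simp
    exact hxy (Set.mem_singleton_iff.1 this)
  have hpair : ({y, x} : Set V) = ({x, y} : Set V) := Set.pair_comm y x
  have hu' : u ∉ ({y, x} : Set V) := hpair ▸ hu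
  have hv' : v ∉ ({y, x} : Set V) := hpair ▸ hv
  have hnr' : ¬ ReachIn G ({y, x} : Set V)ᶜ u v := by rw [hpair]; exact hnr
  have hnrvu : ¬ ReachIn G ({x, y} : Set V)ᶜ v u := fun h => hnr (reachIn_symm h)
  have hnrvu' : ¬ ReachIn G ({y, x} : Set V)ᶜ v u := by rw [hpair]; exact hnrvu
  obtain ⟨wuy, huy_adj, huy_r⟩ := full_side hu hv hr hnr hnsx
  obtain ⟨wux, hux_adj, hux_r0⟩ := full_side hu' hv' hr hnr' hnsy
  have hux_r : ReachIn G ({x, y} : Set V)ᶜ u wux := by rw [← hpair]; exact hux_r0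
  obtain ⟨wvy, hvy_adj, hvy_r⟩ := full_side hv hu hr.symm hnrvu hnsx
  obtain ⟨wvx, hvx_adj, hvx_r0⟩ := full_side hv' hu' hr.symm hnrvu' hnsy
  have hvx_r : ReachIn G ({x, y} : Set V)ᶜ v wvx := by rw [← hpair]; exact hvx_r0
  by_cases hcase : ∀ c, ReachIn G ({x, y} : Set V)ᶜ u c → c ∉ X i
  · exact torso_edge_of_side hxi hyi hxy hux_adj huy_adj hux_r huy_r hcase
  by_cases hcase2 : ∀ c, ReachIn G ({x, y} : Set V)ᶜ v c → c ∉ X i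
  · exact torso_edge_of_side hxi hyi hxy hvx_adj hvy_adj hvx_r hvy_r hcase2
  exfalso
  push_neg at hcase hcase2
  obtain ⟨c₁, hc₁r, hc₁⟩ := hcase
  obtain ⟨c₂, hc₂r, hc₂⟩ := hcase2
  have hc₁W : c₁ ∈ ({x, y} : Set V)ᶜ := hc₁r.2.1
  have hc₂W : c₂ ∈ ({x, y} : Set V)ᶜ := hc₂r.2.1
  have hc₁S : (⟨c₁, hc₁⟩ : X i) ∈ ({⟨x, hxi⟩, ⟨y, hyi⟩} : Set (X i))ᶜ := by
    simp only [Set.mem_compl_iff, Set.mem_insert_iff, Set.mem_singleton_iff,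
      Subtype.mk.injEq]
    simpa using hc₁W
  have hc₂S : (⟨c₂, hc₂⟩ : X i) ∈ ({⟨x, hxi⟩, ⟨y, hyi⟩} : Set (X i))ᶜ := by
    simp only [Set.mem_compl_iff, Set.mem_insert_iff, Set.mem_singleton_iff,
      Subtype.mk.injEq]
    simpa using hc₂W
  have hcard : ({⟨x, hxi⟩, ⟨y, hyi⟩} : Set (X i)).ncard < 3 := by
    rw [Set.ncard_pair (fun h => hxy (congrArg Subtype.val h))]
    norm_num
  have hpre := htri i _ hcard
  obtain ⟨p⟩ := hpre ⟨⟨c₁, hc₁⟩, hc₁S⟩ ⟨⟨c₂, hc₂⟩, hc₂S⟩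
  have h12 : ReachIn G ({x, y} : Set V)ᶜ c₁ c₂ := reachIn_of_torso_walk hxi hyi p
  exact hnr (reachIn_trans hc₁r (reachIn_trans h12 (reachIn_symm hc₂r)))
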